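/- Under the stated assumptions, the first moment of the autoregressive coefficient is identified from the first two autocorrelations of first differences: E(φ) = (1 + 2ρ₁ + ρ₂)/(1 + ρ₁). -/

import Mathlib

open MeasureTheory

/-- The first moment of the autoregressive coefficient is identified from the
first two autocorrelations of first differences: `E(φ) = (1 + 2ρ₁ + ρ₂)/(1 + ρ₁)`. -/
theorem first_moment_identified
    {Ω : Type*} [MeasurableSpace Ω] (P : Measure Ω) [IsProbabilityMeasure P]
    (φ : Ω → ℝ) (hφm : Measurable φ) (ε₀ : ℝ) (hε₀ : 0 < ε₀)
    (hφbd : ∀ᵐ ω ∂P, -1 + ε₀ ≤ φ ω ∧ φ ω ≤ 1)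
    (ρ : ℕ → ℝ)
    (hρ : ∀ h : ℕ, 1 ≤ h → ρ h =
      -(∫ ω, ((1 - φ ω) / (1 + φ ω)) * φ ω ^ (h - 1) ∂P) /
        (2 * ∫ ω, 1 / (1 + φ ω) ∂P)) :
    ∫ ω, φ ω ∂P = (1 + 2 * ρ 1 + ρ 2) / (1 + ρ 1) := by
  have hmeasf : Measurable fun ω => 1 / (1 + φ ω) :=
    measurable_const.div (measurable_const.add hφm)
  -- a.e. positivity of 1 + φ
  have hpos : ∀ᵐ ω ∂P, 0 < 1 + φ ω ∧ 1 + φ ω ≤ 2 := by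
    filter_upwards [hφbd] with ω ⟨h1, h2⟩
    constructor <;> linarith
  -- integrability
  have hf_int : Integrable (fun ω => 1 / (1 + φ ω)) P := by
    refine (integrable_const (1 / ε₀)).mono' hmeasf.aestronglyMeasurable ?_
    filter_upwards [hφbd] with ω ⟨h1, h2⟩
    have h3 : ε₀ ≤ 1 + φ ω := by linarith
    have h4 : (0:ℝ) < 1 + φ ω := lt_of_lt_of_le hε₀ h3
    rw [Real.norm_eq_abs, abs_of_nonneg (by positivity)]
    exact one_div_le_one_div_of_le hε₀ h3
  have hφ_int : Integrable φ P := by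
    refine (integrable_const 1).mono' hφm.aestronglyMeasurable ?_
    filter_upwards [hφbd] with ω ⟨h1, h2⟩
    rw [Real.norm_eq_abs, abs_le]
    constructor <;> linarith
  set d := ∫ ω, 1 / (1 + φ ω) ∂P with hd
  set m := ∫ ω, φ ω ∂P with hm
  -- d ≥ 1/2
  have hd_ge : (1:ℝ)/2 ≤ d := by
    have h := integral_mono_ae (integrable_const ((1:ℝ)/2)) hf_int ?_
    · rwa [integral_const, probReal_univ, smul_eq_mul, one_mul] at h
    · filter_upwards [hpos] with ω ⟨h1, h2⟩
      rw [div_le_div_iff₀ (by norm_num) h1]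
      linarith
  have hd_ne : d ≠ 0 := by positivity
  -- first integral identity
  have h1 : (∫ ω, ((1 - φ ω) / (1 + φ ω)) * φ ω ^ (1 - 1) ∂P) = 2 * d - 1 := by
    have hc : (∫ ω, ((1 - φ ω) / (1 + φ ω)) * φ ω ^ (1 - 1) ∂P)
        = ∫ ω, 2 * (1 / (1 + φ ω)) - 1 ∂P := by
      refine integral_congr_ae ?_
      filter_upwards [hpos] with ω ⟨h1, h2⟩
      have hne : (1 + φ ω) ≠ 0 := ne_of_gt h1
      norm_num
      field_simp
      ring
    rw [hc, integral_sub (hf_int.const_mul 2) (integrable_const 1),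
      integral_const_mul, integral_const]
    simp only [one_div] at hd ⊢
    simp [← hd]
  have h2 : (∫ ω, ((1 - φ ω) / (1 + φ ω)) * φ ω ^ (2 - 1) ∂P) = 2 - 2 * d - m := by
    have hc : (∫ ω, ((1 - φ ω) / (1 + φ ω)) * φ ω ^ (2 - 1) ∂P)
        = ∫ ω, (2 - 2 * (1 / (1 + φ ω))) - φ ω ∂P := by
      refine integral_congr_ae ?_
      filter_upwards [hpos] with ω ⟨h1, h2⟩
      have hne : (1 + φ ω) ≠ 0 := ne_of_gt h1
      norm_num
      field_simp
      ring
    have hi : Integrable (fun ω => 2 - 2 * (1 / (1 + φ ω))) P :=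
      (integrable_const 2).sub (hf_int.const_mul 2)
    rw [hc, integral_sub hi hφ_int,
      integral_sub (integrable_const (2:ℝ)) (hf_int.const_mul 2),
      integral_const_mul, integral_const]
    simp only [one_div] at hd ⊢
    simp [← hd, ← hm]
  have hρ1 : ρ 1 = -(2 * d - 1) / (2 * d) := by rw [hρ 1 le_rfl, h1]
  have hρ2 : ρ 2 = -(2 - 2 * d - m) / (2 * d) := by rw [hρ 2 (by norm_num), h2]
  have hden : 1 + ρ 1 = 1 / (2 * d) := by
    rw [hρ1]; field_simp; ring
  have hnum : 1 + 2 * ρ 1 + ρ 2 = m / (2 * d) := by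
    rw [hρ1, hρ2]; field_simp; ring
  rw [hnum, hden]
  field_simp
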